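/- If I ⊆ [0, N−1] satisfies the Partial Order Property, then for every i ∈ I the set K_i is contained in I. -/

import Mathlib

noncomputable section
open scoped Classical
open Finset

/-- The 2×2 binary matrix [[1,0],[1,1]], as an ℕ-indexed function (zero outside range). -/
def G2 (a b : ℕ) : ZMod 2 :=
  if a = 0 ∧ b = 0 then 1
  else if a = 1 ∧ b = 0 then 1
  else if a = 1 ∧ b = 1 then 1
  else 0

/-- `G n i c` is the (i,c) entry of the n-th Kronecker power over F₂ of [[1,0],[1,1]],
for row/column indices i, c ∈ [0, 2^n − 1] (standard row-major index flattening). -/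
def G : ℕ → ℕ → ℕ → ZMod 2
  | 0 => fun i c => if i = 0 ∧ c = 0 then 1 else 0
  | n + 1 => fun i c => G2 (i / 2 ^ n) (c / 2 ^ n) * G n (i % 2 ^ n) (c % 2 ^ n)

/-- Row i of the polar transform G_N (N = 2^n), as a vector of its coordinates. -/
def g (n i : ℕ) : ℕ → ZMod 2 := fun c => G n i c

/-- S_i ⊆ [0, n−1]: the support of the binary representation of i. -/
def S (n i : ℕ) : Finset ℕ := (Finset.range n).filter fun a => i.testBit a

/-- T_i = [0, n−1] \ S_i. -/
def T (n i : ℕ) : Finset ℕ := Finset.range n \ S n i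

/-- Hamming weight of a vector whose coordinates are indexed by [0, 2^n − 1]. -/
def wt (n : ℕ) (v : ℕ → ZMod 2) : ℕ :=
  ((Finset.range (2 ^ n)).filter fun c => v c ≠ 0).card

/-- The index in [0, 2^n − 1] whose binary support is the set U ⊆ [0, n−1]. -/
def idx (U : Finset ℕ) : ℕ := ∑ a ∈ U, 2 ^ a

/-- K_i = {j ∈ [i+1, N−1] : w(g_j) ≥ w(g_i ⊕ g_j) and w(g_i ⊕ g_j) = w(g_i)}. -/
def K (n i : ℕ) : Finset ℕ :=
  (Finset.Ico (i + 1) (2 ^ n)).filter fun j =>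
    wt n (g n i + g n j) ≤ wt n (g n j) ∧ wt n (g n i + g n j) = wt n (g n i)

/-- One generating step of the partial order on [0, 2^n − 1]. -/
def poStep (n i j : ℕ) : Prop :=
  i < 2 ^ n ∧ j < 2 ^ n ∧
    (S n i ⊆ S n j ∨
      ∃ a b, a ∈ S n i ∧ b ∉ S n i ∧ a < b ∧ S n j = insert b (S n i \ {a}))

/-- The partial order ⪯: reflexive–transitive closure of the generating relation. -/
def po (n : ℕ) : ℕ → ℕ → Prop := Relation.ReflTransGen (poStep n)

/-- Partial Order Property of an information set I ⊆ [0, 2^n − 1]. -/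
def POP (n : ℕ) (I : Finset ℕ) : Prop :=
  ∀ i ∈ I, ∀ j, j < 2 ^ n → po n i j → j ∈ I

/-- The code C(I): all F₂-linear combinations (i.e. subset sums) of the rows g_i, i ∈ I. -/
def codewords (n : ℕ) (I : Finset ℕ) : Finset (ℕ → ZMod 2) :=
  I.powerset.image fun H => ∑ h ∈ H, g n h

/-- A_w(I): the number of codewords of C(I) of Hamming weight w. -/
def A (n : ℕ) (I : Finset ℕ) (w : ℕ) : ℕ :=
  ((codewords n I).filter fun v => wt n v = w).card

/-- The coset C_i(I) = {g_i ⊕ ⊕_{h∈H} g_h : H ⊆ I \ [0,i]}. -/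
def coset (n : ℕ) (I : Finset ℕ) (i : ℕ) : Finset (ℕ → ZMod 2) :=
  ((I.filter fun h => i < h).powerset).image fun H => g n i + ∑ h ∈ H, g n h

/-- A_{i,w}(I): the number of vectors of Hamming weight w in the coset C_i(I). -/
def Ai (n : ℕ) (I : Finset ℕ) (i w : ℕ) : ℕ :=
  ((coset n I i).filter fun v => wt n v = w).card

/- ===================== auxiliary lemmas ===================== -/

lemma mem_S {n i a : ℕ} : a ∈ S n i ↔ a < n ∧ i.testBit a := by
  simp [S]

lemma S_subset_range (n i : ℕ) : S n i ⊆ Finset.range n :=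
  Finset.filter_subset _ _

lemma S_mod (n i : ℕ) : S n (i % 2 ^ n) = S n i := by
  ext a
  simp only [mem_S, Nat.testBit_mod_two_pow]
  constructor <;> rintro ⟨h1, h2⟩ <;> simp_all

lemma div_two_pow_eq {n i : ℕ} (h : i < 2 ^ (n + 1)) :
    i / 2 ^ n = if i.testBit n then 1 else 0 := by
  have h2 : i / 2 ^ n < 2 := Nat.div_lt_of_lt_mul (by rw [pow_succ] at h; omega)
  have h3 : i / 2 ^ n = 0 ∨ i / 2 ^ n = 1 := by
    generalize i / 2 ^ n = d at h2
    omega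
  rcases h3 with h' | h' <;>
    simp [Nat.testBit_eq_decide_div_mod_eq, h']

lemma mem_S_succ {n x a : ℕ} :
    a ∈ S (n + 1) x ↔ a ∈ S n x ∨ (a = n ∧ x.testBit n) := by
  simp only [mem_S]
  constructor
  · rintro ⟨h1, h2⟩
    rcases Nat.lt_succ_iff_lt_or_eq.mp h1 with h | h
    · exact Or.inl ⟨h, h2⟩
    · exact Or.inr ⟨h, h ▸ h2⟩
  · rintro (⟨h1, h2⟩ | ⟨rfl, h2⟩)
    · exact ⟨by omega, h2⟩
    · exact ⟨by omega, h2⟩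

lemma G_eq : ∀ n i c, i < 2 ^ n → c < 2 ^ n →
    G n i c = if S n c ⊆ S n i then 1 else 0 := by
  intro n
  induction n with
  | zero =>
    intro i c hi hc
    interval_cases i
    interval_cases c
    simp [G, S]
  | succ n ih =>
    intro i c hi hc
    have hi' : i % 2 ^ n < 2 ^ n := Nat.mod_lt _ (Nat.two_pow_pos n)
    have hc' : c % 2 ^ n < 2 ^ n := Nat.mod_lt _ (Nat.two_pow_pos n)
    have hsub : S (n + 1) c ⊆ S (n + 1) i ↔
        (S n c ⊆ S n i ∧ (c.testBit n → i.testBit n)) := by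
      constructor
      · intro h
        constructor
        · intro a ha
          have h' : a ∈ S (n + 1) i := h (mem_S_succ.mpr (Or.inl ha))
          rcases mem_S_succ.mp h' with h'' | ⟨rfl, _⟩
          · exact h''
          · exact absurd (mem_S.mp ha).1 (lt_irrefl _)
        · intro hb
          have h' : n ∈ S (n + 1) i := h (mem_S_succ.mpr (Or.inr ⟨rfl, hb⟩))
          rcases mem_S_succ.mp h' with h'' | ⟨_, h''⟩
          · exact absurd (mem_S.mp h'').1 (lt_irrefl _)
          · exact h''
      · rintro ⟨h1, h2⟩ a ha
        rcases mem_S_succ.mp ha with h' | ⟨rfl, hb⟩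
        · exact mem_S_succ.mpr (Or.inl (h1 h'))
        · exact mem_S_succ.mpr (Or.inr ⟨rfl, h2 hb⟩)
    rw [show G (n + 1) i c = G2 (i / 2 ^ n) (c / 2 ^ n) * G n (i % 2 ^ n) (c % 2 ^ n)
        from rfl,
      ih _ _ hi' hc', S_mod, S_mod, div_two_pow_eq hi, div_two_pow_eq hc]
    by_cases hbi : i.testBit n <;> by_cases hbc : c.testBit n <;>
        by_cases hs : S n c ⊆ S n i <;>
      simp [G2, hbi, hbc, hs, hsub]

lemma S_injOn (n : ℕ) : Set.InjOn (S n) (Finset.range (2 ^ n)) := by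
  intro x hx y hy hxy
  simp only [Finset.coe_range, Set.mem_Iio] at hx hy
  apply Nat.eq_of_testBit_eq
  intro a
  by_cases ha : a < n
  · have h := Finset.ext_iff.mp hxy a
    simp only [mem_S, ha, true_and] at h
    cases h1 : x.testBit a <;> cases h2 : y.testBit a <;> simp_all
  · have h1 : x < 2 ^ a := lt_of_lt_of_le hx (Nat.pow_le_pow_right (by norm_num) (by omega))
    have h2 : y < 2 ^ a := lt_of_lt_of_le hy (Nat.pow_le_pow_right (by norm_num) (by omega))
    rw [Nat.testBit_lt_two_pow h1, Nat.testBit_lt_two_pow h2]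

lemma S_image (n : ℕ) :
    (Finset.range (2 ^ n)).image (S n) = (Finset.range n).powerset := by
  apply Finset.eq_of_subset_of_card_le
  · intro U hU
    simp only [Finset.mem_image] at hU
    obtain ⟨c, _, rfl⟩ := hU
    exact Finset.mem_powerset.mpr (S_subset_range n c)
  · rw [Finset.card_powerset, Finset.card_range,
      Finset.card_image_of_injOn (S_injOn n), Finset.card_range]

lemma card_count (n : ℕ) (p : Finset ℕ → Prop) [DecidablePred p] :
    ((Finset.range (2 ^ n)).filter fun c => p (S n c)).card
      = ((Finset.range n).powerset.filter p).card := by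
  rw [← S_image n, Finset.filter_image,
    Finset.card_image_of_injOn ((S_injOn n).mono (Finset.filter_subset _ _))]

lemma powerset_filter_card {n : ℕ} {t : Finset ℕ} (ht : t ⊆ Finset.range n) :
    ((Finset.range n).powerset.filter fun U => U ⊆ t).card = 2 ^ t.card := by
  have h : (Finset.range n).powerset.filter (fun U => U ⊆ t) = t.powerset := by
    ext U
    simp only [Finset.mem_filter, Finset.mem_powerset]
    constructor
    · exact fun h => h.2
    · exact fun h => ⟨h.trans ht, h⟩
  rw [h, Finset.card_powerset]

lemma wt_g (n i : ℕ) (hi : i < 2 ^ n) : wt n (g n i) = 2 ^ (S n i).card := by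
  have h : (Finset.range (2 ^ n)).filter (fun c => g n i c ≠ 0)
      = (Finset.range (2 ^ n)).filter (fun c => S n c ⊆ S n i) := by
    apply Finset.filter_congr
    intro c hc
    rw [Finset.mem_range] at hc
    rw [g, G_eq n i c hi hc]
    split <;> simp_all
  rw [wt, h]
  exact (card_count n (fun U => U ⊆ S n i)).trans
    (powerset_filter_card (S_subset_range n i))

lemma card_xor_filter {α : Type*} (s : Finset α) (p q : α → Prop)
    [DecidablePred p] [DecidablePred q] :
    (s.filter fun x => ¬(p x ↔ q x)).card
        + 2 * (s.filter fun x => p x ∧ q x).card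
      = (s.filter p).card + (s.filter q).card := by
  classical
  simp only [Finset.card_filter]
  rw [Finset.mul_sum, ← Finset.sum_add_distrib, ← Finset.sum_add_distrib]
  apply Finset.sum_congr rfl
  intro x _
  by_cases hp : p x <;> by_cases hq : q x <;> simp [hp, hq]

lemma wt_add (n i j : ℕ) (hi : i < 2 ^ n) (hj : j < 2 ^ n) :
    wt n (g n i + g n j) + 2 * 2 ^ (S n i ∩ S n j).card
      = 2 ^ (S n i).card + 2 ^ (S n j).card := by
  have h : (Finset.range (2 ^ n)).filter (fun c => (g n i + g n j) c ≠ 0)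
      = (Finset.range (2 ^ n)).filter
          (fun c => ¬(S n c ⊆ S n i ↔ S n c ⊆ S n j)) := by
    apply Finset.filter_congr
    intro c hc
    rw [Finset.mem_range] at hc
    simp only [Pi.add_apply, g, G_eq n i c hi hc, G_eq n j c hj hc]
    by_cases h1 : S n c ⊆ S n i <;> by_cases h2 : S n c ⊆ S n j <;>
      simp [h1, h2] <;> decide
  have hint : ((Finset.range n).powerset.filter
      fun U => U ⊆ S n i ∧ U ⊆ S n j).card = 2 ^ (S n i ∩ S n j).card := by
    have he : ((Finset.range n).powerset.filter fun U => U ⊆ S n i ∧ U ⊆ S n j)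
        = (Finset.range n).powerset.filter fun U => U ⊆ S n i ∩ S n j := by
      apply Finset.filter_congr
      intro U _
      simp [Finset.subset_inter_iff]
    rw [he, powerset_filter_card ((Finset.inter_subset_left).trans (S_subset_range n i))]
  have h2 : wt n (g n i + g n j)
      = ((Finset.range n).powerset.filter
          fun U => ¬(U ⊆ S n i ↔ U ⊆ S n j)).card := by
    rw [wt, h]
    exact card_count n (fun U => ¬(U ⊆ S n i ↔ U ⊆ S n j))
  rw [h2,
    ← powerset_filter_card (S_subset_range n i),
    ← powerset_filter_card (S_subset_range n j), ← hint]
  exact card_xor_filter _ _ _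

lemma idx_S (n : ℕ) : ∀ i < 2 ^ n, idx (S n i) = i := by
  induction n with
  | zero =>
    intro i hi
    interval_cases i
    simp [idx, S]
  | succ n ih =>
    intro i hi
    have hmod : i % 2 ^ n < 2 ^ n := Nat.mod_lt _ (Nat.two_pow_pos n)
    have hdm := Nat.div_add_mod i (2 ^ n)
    have hd := div_two_pow_eq hi
    have hsum : ∑ a ∈ S n i, 2 ^ a = i % 2 ^ n := by
      rw [← S_mod n i]; exact ih _ hmod
    by_cases hb : i.testBit n
    · have hS : S (n + 1) i = insert n (S n i) := by
        ext a
        rw [mem_S_succ, Finset.mem_insert]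
        constructor
        · rintro (h | ⟨rfl, _⟩)
          exacts [Or.inr h, Or.inl rfl]
        · rintro (rfl | h)
          exacts [Or.inr ⟨rfl, hb⟩, Or.inl h]
      have hn : n ∉ S n i := fun h => absurd (mem_S.mp h).1 (lt_irrefl _)
      rw [idx, hS, Finset.sum_insert hn, hsum]
      simp only [hb, if_true] at hd
      rw [hd, mul_one] at hdm
      omega
    · have hS : S (n + 1) i = S n i := by
        ext a
        rw [mem_S_succ]
        constructor
        · rintro (h | ⟨rfl, hcontra⟩)
          exacts [h, absurd hcontra hb]
        · exact Or.inl
      rw [idx, hS, hsum]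
      simp [hb] at hd
      rw [Nat.div_eq_of_lt hd, mul_zero] at hdm
      omega

/-- if I satisfies the Partial Order Property then K_i ⊆ I for every i ∈ I. -/
theorem K_subset_of_POP (n : ℕ) (hn : 1 ≤ n) (I : Finset ℕ)
    (hIr : ∀ i ∈ I, i < 2 ^ n) (hPOP : POP n I) :
    ∀ i ∈ I, ∀ j ∈ K n i, j ∈ I := by
  intro i hi j hj
  have hiN : i < 2 ^ n := hIr i hi
  rw [K, Finset.mem_filter, Finset.mem_Ico] at hj
  obtain ⟨⟨hij, hjN⟩, hle, heq⟩ := hj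
  have hwi := wt_g n i hiN
  have hwj := wt_g n j hjN
  have hws := wt_add n i j hiN hjN
  set a := (S n i).card with ha_def
  set b := (S n j).card with hb_def
  set m := (S n i ∩ S n j).card with hm_def
  have hma : (2 : ℕ) ^ m ≤ 2 ^ a :=
    Nat.pow_le_pow_right (by norm_num) (Finset.card_le_card Finset.inter_subset_left)
  have hb' : (2 : ℕ) ^ b = 2 * 2 ^ m := by omega
  have hbm : b = m + 1 := by
    have h2 : (2 : ℕ) ^ b = 2 ^ (m + 1) := by rw [hb', pow_succ]; ring
    exact Nat.pow_right_injective (le_refl 2) h2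
  have ha' : (2 : ℕ) ^ a ≤ 2 * 2 ^ m := by omega
  have hposm : 0 < 2 ^ m := Nat.two_pow_pos m
  have ham : a ≤ m + 1 := by
    by_contra h
    have h1 : (2 : ℕ) ^ (m + 2) ≤ 2 ^ a := Nat.pow_le_pow_right (by norm_num) (by omega)
    have h2 : (2 : ℕ) ^ (m + 2) = 2 * (2 * 2 ^ m) := by ring
    omega
  have hmlea : m ≤ a := Finset.card_le_card Finset.inter_subset_left
  have hcard_ji : (S n j \ S n i).card = 1 := by
    have h1 : (S n j \ S n i).card + (S n j ∩ S n i).card = b :=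
      Finset.card_sdiff_add_card_inter _ _
    rw [Finset.inter_comm] at h1
    omega
  have hcard_ij : (S n i \ S n j).card ≤ 1 := by
    have h1 : (S n i \ S n j).card + (S n i ∩ S n j).card = a :=
      Finset.card_sdiff_add_card_inter _ _
    omega
  obtain ⟨b', hb'eq⟩ := Finset.card_eq_one.mp hcard_ji
  have hb'j : b' ∈ S n j := by
    have : b' ∈ S n j \ S n i := hb'eq ▸ Finset.mem_singleton_self b'
    exact (Finset.mem_sdiff.mp this).1
  have hb'i : b' ∉ S n i := by
    have : b' ∈ S n j \ S n i := hb'eq ▸ Finset.mem_singleton_self b'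
    exact (Finset.mem_sdiff.mp this).2
  rcases Nat.lt_or_ge (S n i \ S n j).card 1 with hc0 | hc1
  · -- S n i ⊆ S n j
    have hsub : S n i ⊆ S n j := by
      rw [← Finset.sdiff_eq_empty_iff_subset]
      exact Finset.card_eq_zero.mp (by omega)
    exact hPOP i hi j hjN
      (Relation.ReflTransGen.single ⟨hiN, hjN, Or.inl hsub⟩)
  · have hc1' : (S n i \ S n j).card = 1 := le_antisymm hcard_ij hc1
    obtain ⟨a', ha'eq⟩ := Finset.card_eq_one.mp hc1'
    have ha'i : a' ∈ S n i := by
      have : a' ∈ S n i \ S n j := ha'eq ▸ Finset.mem_singleton_self a'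
      exact (Finset.mem_sdiff.mp this).1
    have ha'j : a' ∉ S n j := by
      have : a' ∈ S n i \ S n j := ha'eq ▸ Finset.mem_singleton_self a'
      exact (Finset.mem_sdiff.mp this).2
    -- set identities
    have hSi : S n i = insert a' (S n i ∩ S n j) := by
      ext x
      have hx := Finset.ext_iff.mp ha'eq x
      simp only [Finset.mem_sdiff, Finset.mem_singleton] at hx
      simp only [Finset.mem_insert, Finset.mem_inter]
      constructor
      · intro hxi
        by_cases hxj : x ∈ S n j
        · exact Or.inr ⟨hxi, hxj⟩
        · exact Or.inl (hx.mp ⟨hxi, hxj⟩)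
      · rintro (rfl | ⟨h1, _⟩)
        exacts [ha'i, h1]
    have hSj : S n j = insert b' (S n i ∩ S n j) := by
      ext x
      have hx := Finset.ext_iff.mp hb'eq x
      simp only [Finset.mem_sdiff, Finset.mem_singleton] at hx
      simp only [Finset.mem_insert, Finset.mem_inter]
      constructor
      · intro hxj
        by_cases hxi : x ∈ S n i
        · exact Or.inr ⟨hxi, hxj⟩
        · exact Or.inl (hx.mp ⟨hxj, hxi⟩)
      · rintro (rfl | ⟨_, h2⟩)
        exacts [hb'j, h2]
    have ha'int : a' ∉ S n i ∩ S n j := fun h => ha'j (Finset.mem_inter.mp h).2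
    have hb'int : b' ∉ S n i ∩ S n j := fun h => hb'i (Finset.mem_inter.mp h).1
    obtain ⟨M, hM⟩ : ∃ M, S n i ∩ S n j = M := ⟨_, rfl⟩
    rw [hM] at hSi hSj ha'int hb'int
    -- a' < b'
    have hieq : i = 2 ^ a' + ∑ x ∈ M, 2 ^ x := by
      conv_lhs => rw [← idx_S n i hiN]
      rw [idx, hSi, Finset.sum_insert ha'int]
    have hjeq : j = 2 ^ b' + ∑ x ∈ M, 2 ^ x := by
      conv_lhs => rw [← idx_S n j hjN]
      rw [idx, hSj, Finset.sum_insert hb'int]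
    have hpow : (2 : ℕ) ^ a' < 2 ^ b' := by omega
    have hab : a' < b' := by
      by_contra h
      exact absurd (Nat.pow_le_pow_right (by norm_num) (not_lt.mp h)) (not_le.mpr hpow)
    -- S n j = insert b' (S n i \ {a'})
    have hsd : S n i \ {a'} = M := by
      rw [hSi]
      ext x
      simp only [Finset.mem_sdiff, Finset.mem_insert, Finset.mem_singleton]
      constructor
      · rintro ⟨h | h, hne⟩
        · exact absurd h hne
        · exact h
      · intro h
        exact ⟨Or.inr h, fun e => ha'int (e ▸ h)⟩
    have hSj' : S n j = insert b' (S n i \ {a'}) := by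
      rw [hsd]; exact hSj
    exact hPOP i hi j hjN
      (Relation.ReflTransGen.single
        ⟨hiN, hjN, Or.inr ⟨a', b', ha'i, hb'i, hab, hSj'⟩⟩)
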